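/- Let $t_0,t_1,t_2$ be pairwise distinct elements of a field and let $g, k_1, k_2$ be integers. Set $x = t_0 - t_1$, $y = t_0 - t_2$, $z = t_2 - t_1$. Then $x^{g-k_1-1} y^{g-k_2-1}\left( -\frac{(k_2+2-2g)z + (k_1-k_2)y}{y^2 z^2} + \frac{(k_1+2-2g)z - (k_2-k_1)x}{x^2 z^2} \right) = x^{g-k_1-3} y^{g-k_2-3}\big((4g-4-k_1-k_2)t_0 - (2g-2-k_2)t_1 - (2g-2-k_1)t_2\big)$, interpreting negative exponents as inverses in the field. -/

import Mathlib

theorem DT_rational_identity {F : Type*} [Field F] (t0 t1 t2 : F)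
    (h01 : t0 ≠ t1) (h02 : t0 ≠ t2) (h12 : t1 ≠ t2) (g k1 k2 : ℤ)
    (x y z : F) (hx : x = t0 - t1) (hy : y = t0 - t2) (hz : z = t2 - t1) :
    x ^ (g - k1 - 1) * y ^ (g - k2 - 1)
        * (-((((k2 + 2 - 2 * g : ℤ) : F) * z + ((k1 - k2 : ℤ) : F) * y) / (y ^ 2 * z ^ 2))
            + ((((k1 + 2 - 2 * g : ℤ) : F) * z - ((k2 - k1 : ℤ) : F) * x) / (x ^ 2 * z ^ 2)))
      = x ^ (g - k1 - 3) * y ^ (g - k2 - 3)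
          * (((4 * g - 4 - k1 - k2 : ℤ) : F) * t0 - ((2 * g - 2 - k2 : ℤ) : F) * t1
              - ((2 * g - 2 - k1 : ℤ) : F) * t2) := by
  have hxne : x ≠ 0 := by rw [hx]; exact sub_ne_zero.mpr h01
  have hyne : y ≠ 0 := by rw [hy]; exact sub_ne_zero.mpr h02
  have hzne : z ≠ 0 := by rw [hz]; exact sub_ne_zero.mpr h12.symm
  have hxp : x ^ (g - k1 - 1) = x ^ (g - k1 - 3) * x ^ (2 : ℤ) := by
    rw [← zpow_add₀ hxne]; ring_nf
  have hyp : y ^ (g - k2 - 1) = y ^ (g - k2 - 3) * y ^ (2 : ℤ) := by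
    rw [← zpow_add₀ hyne]; ring_nf
  rw [hxp, hyp]
  have hx2 : x ^ (2 : ℤ) = x ^ (2 : ℕ) := by norm_cast
  have hy2 : y ^ (2 : ℤ) = y ^ (2 : ℕ) := by norm_cast
  rw [hx2, hy2]
  have key : x ^ (2 : ℕ) * y ^ (2 : ℕ)
      * (-((((k2 + 2 - 2 * g : ℤ) : F) * z + ((k1 - k2 : ℤ) : F) * y) / (y ^ 2 * z ^ 2))
            + ((((k1 + 2 - 2 * g : ℤ) : F) * z - ((k2 - k1 : ℤ) : F) * x) / (x ^ 2 * z ^ 2)))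
      = (((4 * g - 4 - k1 - k2 : ℤ) : F) * t0 - ((2 * g - 2 - k2 : ℤ) : F) * t1
              - ((2 * g - 2 - k1 : ℤ) : F) * t2) := by
    subst hx hy hz
    field_simp
    push_cast
    ring
  calc x ^ (g - k1 - 3) * x ^ (2:ℕ) * (y ^ (g - k2 - 3) * y ^ (2:ℕ))
        * (-((((k2 + 2 - 2 * g : ℤ) : F) * z + ((k1 - k2 : ℤ) : F) * y) / (y ^ 2 * z ^ 2))
            + ((((k1 + 2 - 2 * g : ℤ) : F) * z - ((k2 - k1 : ℤ) : F) * x) / (x ^ 2 * z ^ 2)))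
      = x ^ (g - k1 - 3) * y ^ (g - k2 - 3) * (x ^ (2:ℕ) * y ^ (2:ℕ)
        * (-((((k2 + 2 - 2 * g : ℤ) : F) * z + ((k1 - k2 : ℤ) : F) * y) / (y ^ 2 * z ^ 2))
            + ((((k1 + 2 - 2 * g : ℤ) : F) * z - ((k2 - k1 : ℤ) : F) * x) / (x ^ 2 * z ^ 2)))) := by
        ring
    _ = _ := by rw [key]
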